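/- With A as in the binomial determinant setting, for every 1 ≤ i ≤ t, the polynomial ∏_{j=0}^{a−1} (x_i − j)^{b} · ∏_{j=1}^{b−1} (x_i − a + 1 − j)^{b−j} divides det A in ℚ[x_1,…,x_t]. -/

import Mathlib

open Finset

private lemma prod_prod_range_eq {R : Type*} [CommMonoid R] (g : ℕ → R) (b : ℕ) :
    ∏ c ∈ range b, ∏ j ∈ range c, g j = ∏ j ∈ range b, g j ^ (b - 1 - j) := by
  induction b with
  | zero => simp
  | succ b ih =>
    rw [prod_range_succ, ih, ← prod_mul_distrib, prod_range_succ]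
    simp only [Nat.succ_sub_one]
    rw [Nat.sub_self, pow_zero, mul_one]
    refine prod_congr rfl fun j hj => ?_
    rw [mem_range] at hj
    rw [← pow_succ]
    congr 1
    omega



/-- Generalized binomial coefficient `C(x,k) = x(x-1)⋯(x-k+1)/k!` in a commutative ℚ-algebra. -/
noncomputable def gbinom {R : Type*} [CommRing R] [Algebra ℚ R] (x : R) (k : ℕ) : R :=
  algebraMap ℚ R ((k.factorial : ℚ)⁻¹) * ∏ i ∈ Finset.range k, (x - (i : R))

/-- The `bt × bt` matrix `A`: rows indexed by `p = (p₁,p₂)` encoding `r - 1 = b·p₁ + p₂`,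
columns indexed by `(s, c)` with `1 ≤ s ≤ t`, `0 ≤ c ≤ b-1`, with entry
`C(x_s, a + c + r - 1)`. -/
noncomputable def binomMatrix (a b t : ℕ) :
    Matrix (Fin t × Fin b) (Fin t × Fin b) (MvPolynomial (Fin t) ℚ) :=
  fun p col =>
    gbinom (MvPolynomial.X col.1) (a + (col.2 : ℕ) + (b * (p.1 : ℕ) + (p.2 : ℕ)))

/-- The polynomial (or scalar) `H(x_1,…,x_t)` from the appendix. -/
noncomputable def Hfun {R : Type*} [CommRing R] (a b t : ℕ) (x : Fin t → R) : R :=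
  (∏ i : Fin t,
      ((∏ j ∈ Finset.Icc 1 (b - 1), (x i + (j : R)) ^ (b - j)) *
        (∏ j ∈ Finset.range a, (x i - (j : R)) ^ b) *
        ∏ j ∈ Finset.Icc 1 (b - 1), (x i - (a : R) + 1 - (j : R)) ^ (b - j))) *
    ∏ p ∈ Finset.univ.filter (fun p : Fin t × Fin t => p.1 < p.2),
      ∏ k ∈ Finset.Icc (-(b : ℤ) + 1) ((b : ℤ) - 1),
        (x p.1 - x p.2 + (k : R)) ^ (b - k.natAbs)

theorem binom_det_divisibility_roots (a b t : ℕ) (ha : 1 ≤ a) (hb : 1 ≤ b) (ht : 1 ≤ t)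
    (i : Fin t) :
    ((∏ j ∈ Finset.range a, (MvPolynomial.X i - (j : MvPolynomial (Fin t) ℚ)) ^ b) *
        ∏ j ∈ Finset.Icc 1 (b - 1),
          (MvPolynomial.X i - (a : MvPolynomial (Fin t) ℚ) + 1 -
              (j : MvPolynomial (Fin t) ℚ)) ^ (b - j)) ∣
      (binomMatrix a b t).det := by
  set R := MvPolynomial (Fin t) ℚ
  set v : Fin t × Fin b → R := fun col =>
    if col.1 = i then ∏ m ∈ range (a + (col.2 : ℕ)), (MvPolynomial.X i - (m : R)) else 1
    with hv
  set B : Matrix (Fin t × Fin b) (Fin t × Fin b) R := fun p col =>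
    if col.1 = i then
      algebraMap ℚ R (((a + (col.2 : ℕ) + (b * (p.1 : ℕ) + (p.2 : ℕ))).factorial : ℚ)⁻¹) *
        ∏ m ∈ range (b * (p.1 : ℕ) + (p.2 : ℕ)),
          (MvPolynomial.X i - ((a + (col.2 : ℕ) + m : ℕ) : R))
    else binomMatrix a b t p col
    with hB
  have hfac : binomMatrix a b t = Matrix.of fun p col => v col * B p col := by
    funext p col
    simp only [Matrix.of_apply, hv, hB]
    by_cases h : col.1 = i
    · simp only [h, if_pos]
      rw [binomMatrix, gbinom, h, prod_range_add]
      ring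
    · simp only [h, if_neg, not_false_iff, one_mul]
  rw [hfac, Matrix.det_mul_row]
  refine Dvd.dvd.mul_right ?_ _
  have hsplit : (∏ col : Fin t × Fin b, v col) =
      ∏ c : Fin b, ∏ m ∈ range (a + (c : ℕ)), (MvPolynomial.X i - (m : R)) := by
    rw [Fintype.prod_prod_type]
    rw [Finset.prod_eq_single_of_mem i (mem_univ i)]
    · simp [hv]
    · intro s _ hs
      simp [hv, hs]
  rw [hsplit]
  have key : (∏ c : Fin b, ∏ m ∈ range (a + (c : ℕ)), (MvPolynomial.X i - (m : R))) =
      (∏ j ∈ Finset.range a, (MvPolynomial.X i - (j : R)) ^ b) *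
        ∏ j ∈ Finset.Icc 1 (b - 1),
          (MvPolynomial.X i - (a : R) + 1 - (j : R)) ^ (b - j) := by
    have h1 : ∀ c : Fin b, ∏ m ∈ range (a + (c : ℕ)), (MvPolynomial.X i - (m : R)) =
        (∏ m ∈ range a, (MvPolynomial.X i - (m : R))) *
          ∏ m ∈ range (c : ℕ), (MvPolynomial.X i - ((a + m : ℕ) : R)) := by
      intro c
      rw [prod_range_add]
    rw [prod_congr rfl (fun c _ => h1 c), prod_mul_distrib, prod_const, card_univ,
      Fintype.card_fin, ← Finset.prod_pow]
    congr 1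
    rw [Fin.prod_univ_eq_prod_range (fun c => ∏ m ∈ range c,
        (MvPolynomial.X i - ((a + m : ℕ) : R))) b,
      prod_prod_range_eq (fun m => (MvPolynomial.X i - ((a + m : ℕ) : R))) b]
    have hIcc : Finset.Icc 1 (b - 1) = Finset.Ico 1 b := by
      rw [← Finset.Ico_add_one_right_eq_Icc]
      congr 1
      omega
    rw [hIcc, prod_Ico_eq_prod_range]
    have hb' : b = (b - 1) + 1 := by omega
    conv_lhs => rw [hb', prod_range_succ]
    rw [← hb']
    have : b - 1 - (b - 1) = 0 := by omega
    rw [this, pow_zero, mul_one]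
    refine prod_congr rfl fun k hk => ?_
    rw [mem_range] at hk
    have he : b - 1 - k = b - (1 + k) := by omega
    rw [he]
    congr 1
    push_cast
    ring
  rw [key]
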